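/- Capped adaptive one-step contraction: let θ ∈ [0,1], p ∈ Δ_q, and W = {i : f_i(x) ≥ θ max_j f_j(x) + (1−θ) Σ_j p_j f_j(x)}. Then W is nonempty, and if q^k ∈ Δ_q is supported on W and x − x* ∈ range(B^{-1}Aᵀ), the expected next error satisfies Σ_i q^k_i ‖x^{+,i} − x*‖²_B ≤ (1 − θσ_∞²(B,S) − (1−θ)σ_p²(B,S)) ‖x − x*‖²_B, where x^{+,i} is the sketch-and-project update using sketch S_i. -/

import Mathlib

open Matrix BigOperators

/-- The four Penrose equations characterizing the Moore–Penrose pseudoinverse `P` of `M`. -/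
def PenroseInv {k : ℕ} (M P : Matrix (Fin k) (Fin k) ℝ) : Prop :=
  M * P * M = M ∧ P * M * P = P ∧ (M * P)ᵀ = M * P ∧ (P * M)ᵀ = P * M

/-- The projection matrix `Z = B^{-1/2} Aᵀ S (Sᵀ A B⁻¹ Aᵀ S)† Sᵀ A B^{-1/2}`, where `Bh`
plays the role of `B^{1/2}` and `P` that of the pseudoinverse `(Sᵀ A B⁻¹ Aᵀ S)†`. -/
noncomputable def Zmat {m n τ : ℕ} (A : Matrix (Fin m) (Fin n) ℝ) (B Bh : Matrix (Fin n) (Fin n) ℝ)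
    (S : Matrix (Fin m) (Fin τ) ℝ) (P : Matrix (Fin τ) (Fin τ) ℝ) :
    Matrix (Fin n) (Fin n) ℝ :=
  Bh⁻¹ * Aᵀ * (S * P * Sᵀ) * A * Bh⁻¹

/-- Sketched loss expressed via the projection `Z`:  `f(x) = ‖B^{1/2}(x - x*)‖²_Z`. -/
noncomputable def zloss {m n τ : ℕ} (A : Matrix (Fin m) (Fin n) ℝ)
    (B Bh : Matrix (Fin n) (Fin n) ℝ) (S : Matrix (Fin m) (Fin τ) ℝ)
    (P : Matrix (Fin τ) (Fin τ) ℝ) (xs x : Fin n → ℝ) : ℝ :=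
  Bh.mulVec (x - xs) ⬝ᵥ (Zmat A B Bh S P).mulVec (Bh.mulVec (x - xs))

/-- The spectral constant `σ_p²(B,S)`. -/
noncomputable def sigmaP {m n τ q : ℕ} (A : Matrix (Fin m) (Fin n) ℝ)
    (B Bh : Matrix (Fin n) (Fin n) ℝ) (S : Fin q → Matrix (Fin m) (Fin τ) ℝ)
    (P : Fin q → Matrix (Fin τ) (Fin τ) ℝ) (p : Fin q → ℝ) : ℝ :=
  sInf {r : ℝ | ∃ v, v ≠ 0 ∧ v ∈ Set.range (B⁻¹ * Aᵀ).mulVec ∧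
    r = Bh.mulVec v ⬝ᵥ (∑ i, p i • Zmat A B Bh (S i) (P i)).mulVec (Bh.mulVec v) /
      (v ⬝ᵥ B.mulVec v)}

/-- The spectral constant `σ_∞²(B,S)`. -/
noncomputable def sigmaInf {m n τ q : ℕ} (A : Matrix (Fin m) (Fin n) ℝ)
    (B Bh : Matrix (Fin n) (Fin n) ℝ) (S : Fin q → Matrix (Fin m) (Fin τ) ℝ)
    (P : Fin q → Matrix (Fin τ) (Fin τ) ℝ) : ℝ :=
  sInf {r : ℝ | ∃ v, v ≠ 0 ∧ v ∈ Set.range (B⁻¹ * Aᵀ).mulVec ∧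
    r = ⨆ i, Bh.mulVec v ⬝ᵥ (Zmat A B Bh (S i) (P i)).mulVec (Bh.mulVec v) /
      (v ⬝ᵥ B.mulVec v)}

lemma dot_trans {k l : ℕ} (M : Matrix (Fin k) (Fin l) ℝ) (u : Fin l → ℝ) (v : Fin k → ℝ) :
    (M *ᵥ u) ⬝ᵥ v = u ⬝ᵥ (Mᵀ *ᵥ v) := by
  rw [dotProduct_comm, dotProduct_mulVec, dotProduct_comm, mulVec_transpose]

lemma quad_congr {k l : ℕ} (M : Matrix (Fin k) (Fin l) ℝ) (N : Matrix (Fin k) (Fin k) ℝ)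
    (v : Fin l → ℝ) : (M *ᵥ v) ⬝ᵥ N *ᵥ (M *ᵥ v) = v ⬝ᵥ (Mᵀ * N * M) *ᵥ v := by
  rw [mulVec_mulVec, dot_trans, mulVec_mulVec, ← Matrix.mul_assoc]

lemma dot_sum {k q : ℕ} (u : Fin k → ℝ) (z : Fin q → Fin k → ℝ) :
    u ⬝ᵥ (∑ i, z i) = ∑ i, u ⬝ᵥ z i := by
  simp only [dotProduct, Finset.sum_apply, Finset.mul_sum]
  exact Finset.sum_comm

lemma dot_self_nonneg {k : ℕ} (v : Fin k → ℝ) : 0 ≤ v ⬝ᵥ v :=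
  Finset.sum_nonneg fun i _ => mul_self_nonneg _

lemma penroseInv_unique {k : ℕ} {M P1 P2 : Matrix (Fin k) (Fin k) ℝ}
    (h1 : PenroseInv M P1) (h2 : PenroseInv M P2) : P1 = P2 := by
  obtain ⟨a1, b1, c1, d1⟩ := h1
  obtain ⟨a2, b2, c2, d2⟩ := h2
  have hMP : M * P1 = M * P2 := by
    calc M * P1 = (M * P1)ᵀ := c1.symm
      _ = ((M * P2 * M) * P1)ᵀ := by rw [a2]
      _ = ((M * P2) * (M * P1))ᵀ := by simp [Matrix.mul_assoc]
      _ = (M * P1)ᵀ * (M * P2)ᵀ := by rw [transpose_mul]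
      _ = (M * P1) * (M * P2) := by rw [c1, c2]
      _ = (M * P1 * M) * P2 := by simp [Matrix.mul_assoc]
      _ = M * P2 := by rw [a1]
  have hPM : P1 * M = P2 * M := by
    calc P1 * M = (P1 * M)ᵀ := d1.symm
      _ = (P1 * (M * P2 * M))ᵀ := by rw [a2]
      _ = ((P1 * M) * (P2 * M))ᵀ := by simp [Matrix.mul_assoc]
      _ = (P2 * M)ᵀ * (P1 * M)ᵀ := by rw [transpose_mul]
      _ = (P2 * M) * (P1 * M) := by rw [d1, d2]
      _ = P2 * (M * P1 * M) := by simp [Matrix.mul_assoc]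
      _ = P2 * M := by rw [a1]
  calc P1 = P1 * M * P1 := b1.symm
    _ = P1 * (M * P1) := by rw [Matrix.mul_assoc]
    _ = P1 * (M * P2) := by rw [hMP]
    _ = (P1 * M) * P2 := by rw [Matrix.mul_assoc]
    _ = (P2 * M) * P2 := by rw [hPM]
    _ = P2 := b2

lemma penroseInv_symm {k : ℕ} {M P : Matrix (Fin k) (Fin k) ℝ} (hM : Mᵀ = M)
    (h : PenroseInv M P) : Pᵀ = P := by
  obtain ⟨a, b, c, d⟩ := h
  refine penroseInv_unique ⟨?_, ?_, ?_, ?_⟩ ⟨a, b, c, d⟩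
  · have : M * Pᵀ * M = (Mᵀ * P * Mᵀ)ᵀ := by simp [transpose_mul, Matrix.mul_assoc]
    rw [this, hM, a, hM]
  · have : Pᵀ * M * Pᵀ = (P * Mᵀ * P)ᵀ := by simp [transpose_mul, Matrix.mul_assoc]
    rw [this, hM, b]
  · calc (M * Pᵀ)ᵀ = P * Mᵀ := by simp
      _ = P * M := by rw [hM]
      _ = (P * M)ᵀ := d.symm
      _ = Mᵀ * Pᵀ := by rw [transpose_mul]
      _ = M * Pᵀ := by rw [hM]
  · calc (Pᵀ * M)ᵀ = Mᵀ * P := by simp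
      _ = M * P := by rw [hM]
      _ = (M * P)ᵀ := c.symm
      _ = Pᵀ * Mᵀ := by rw [transpose_mul]
      _ = Pᵀ * M := by rw [hM]

section core
variable {m n τ : ℕ} (A : Matrix (Fin m) (Fin n) ℝ) (B Bh : Matrix (Fin n) (Fin n) ℝ)
  (S : Matrix (Fin m) (Fin τ) ℝ) (P : Matrix (Fin τ) (Fin τ) ℝ)

/-- zloss quadratic form equals the plain quadratic form. -/
lemma zq (hBhs : Bhᵀ = Bh) (hBhd : IsUnit Bh.det) (v : Fin n → ℝ) :
    (Bh *ᵥ v) ⬝ᵥ (Zmat A B Bh S P) *ᵥ (Bh *ᵥ v) = v ⬝ᵥ (Aᵀ * (S * P * Sᵀ) * A) *ᵥ v := by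
  rw [quad_congr, hBhs]
  congr 2
  rw [Zmat, show Bh⁻¹ * Aᵀ * (S * P * Sᵀ) * A * Bh⁻¹
      = Bh⁻¹ * (Aᵀ * (S * P * Sᵀ) * A * Bh⁻¹) by simp [Matrix.mul_assoc],
    Matrix.mul_nonsing_inv_cancel_left _ _ hBhd,
    Matrix.nonsing_inv_mul_cancel_right _ _ hBhd]

lemma fnn (hBhs : Bhᵀ = Bh) (hBhd : IsUnit Bh.det) (hBhB : Bh * Bh = B)
    (hPs : Pᵀ = P) (hP : PenroseInv (Sᵀ * A * B⁻¹ * Aᵀ * S) P) (v : Fin n → ℝ) :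
    0 ≤ v ⬝ᵥ (Aᵀ * (S * P * Sᵀ) * A) *ᵥ v := by
  have hBhinvs : (Bh⁻¹)ᵀ = Bh⁻¹ := by rw [Matrix.transpose_nonsing_inv, hBhs]
  have hBinv : B⁻¹ = Bh⁻¹ * Bh⁻¹ := by rw [← hBhB, Matrix.mul_inv_rev]
  have hE : Aᵀ * (S * P * Sᵀ) * A = (Sᵀ * A)ᵀ * P * (Sᵀ * A) := by
    simp [transpose_mul, Matrix.mul_assoc]
  have hGD : Sᵀ * A * B⁻¹ * Aᵀ * S = (Bh⁻¹ * Aᵀ * S)ᵀ * (Bh⁻¹ * Aᵀ * S) := by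
    rw [hBinv]; simp [transpose_mul, hBhinvs, Matrix.mul_assoc]
  have hPP : Pᵀ * (Sᵀ * A * B⁻¹ * Aᵀ * S) * P = P := by rw [hPs]; exact hP.2.1
  have e1 : v ⬝ᵥ (Aᵀ * (S * P * Sᵀ) * A) *ᵥ v
      = ((Sᵀ * A) *ᵥ v) ⬝ᵥ P *ᵥ ((Sᵀ * A) *ᵥ v) := by
    rw [hE]; exact (quad_congr (Sᵀ * A) P v).symm
  have e2 : ((Sᵀ * A) *ᵥ v) ⬝ᵥ P *ᵥ ((Sᵀ * A) *ᵥ v)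
      = (P *ᵥ ((Sᵀ * A) *ᵥ v)) ⬝ᵥ (Sᵀ * A * B⁻¹ * Aᵀ * S) *ᵥ (P *ᵥ ((Sᵀ * A) *ᵥ v)) :=
    ((quad_congr P _ ((Sᵀ * A) *ᵥ v)).trans (by rw [hPP])).symm
  have e3 : (P *ᵥ ((Sᵀ * A) *ᵥ v)) ⬝ᵥ (Sᵀ * A * B⁻¹ * Aᵀ * S) *ᵥ (P *ᵥ ((Sᵀ * A) *ᵥ v))
      = ((Bh⁻¹ * Aᵀ * S) *ᵥ (P *ᵥ ((Sᵀ * A) *ᵥ v))) ⬝ᵥ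
        ((Bh⁻¹ * Aᵀ * S) *ᵥ (P *ᵥ ((Sᵀ * A) *ᵥ v))) := by
    rw [hGD, dot_trans (Bh⁻¹ * Aᵀ * S) (P *ᵥ ((Sᵀ * A) *ᵥ v)),
      mulVec_mulVec _ (Bh⁻¹ * Aᵀ * S)ᵀ (Bh⁻¹ * Aᵀ * S)]
  rw [e1, e2, e3]
  exact dot_self_nonneg _

lemma err_eq (hBs : Bᵀ = B) (hBd : IsUnit B.det)
    (hPs : Pᵀ = P) (hP : PenroseInv (Sᵀ * A * B⁻¹ * Aᵀ * S) P) (v : Fin n → ℝ) :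
    (v - (B⁻¹ * Aᵀ * (S * P * Sᵀ)) *ᵥ (A *ᵥ v)) ⬝ᵥ B *ᵥ (v - (B⁻¹ * Aᵀ * (S * P * Sᵀ)) *ᵥ (A *ᵥ v))
      = v ⬝ᵥ B *ᵥ v - v ⬝ᵥ (Aᵀ * (S * P * Sᵀ) * A) *ᵥ v := by
  have hBinvs : (B⁻¹)ᵀ = B⁻¹ := by rw [Matrix.transpose_nonsing_inv, hBs]
  set N := B⁻¹ * Aᵀ * (S * P * Sᵀ) * A with hN
  have hBN : B * N = Aᵀ * (S * P * Sᵀ) * A := by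
    rw [hN, show B⁻¹ * Aᵀ * (S * P * Sᵀ) * A = B⁻¹ * (Aᵀ * (S * P * Sᵀ) * A) by
      simp [Matrix.mul_assoc], Matrix.mul_nonsing_inv_cancel_left _ _ hBd]
  have hNt : Nᵀ = Aᵀ * (S * P * Sᵀ) * A * B⁻¹ := by
    rw [hN]; simp [transpose_mul, hBinvs, hPs, Matrix.mul_assoc]
  have hNtB : Nᵀ * B = Aᵀ * (S * P * Sᵀ) * A := by
    rw [hNt, Matrix.nonsing_inv_mul_cancel_right _ _ hBd]
  have hNtBN : Nᵀ * B * N = Aᵀ * (S * P * Sᵀ) * A := by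
    rw [hNtB, hN]
    calc Aᵀ * (S * P * Sᵀ) * A * (B⁻¹ * Aᵀ * (S * P * Sᵀ) * A)
        = Aᵀ * (S * (P * (Sᵀ * A * B⁻¹ * Aᵀ * S) * P) * (Sᵀ * A)) := by
          simp only [Matrix.mul_assoc]
      _ = Aᵀ * (S * P * (Sᵀ * A)) := by rw [hP.2.1]
      _ = Aᵀ * (S * P * Sᵀ) * A := by simp only [Matrix.mul_assoc]
  have h2 : v ⬝ᵥ B *ᵥ (N *ᵥ v) = v ⬝ᵥ (Aᵀ * (S * P * Sᵀ) * A) *ᵥ v := by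
    rw [mulVec_mulVec, hBN]
  have h3 : (N *ᵥ v) ⬝ᵥ B *ᵥ v = v ⬝ᵥ (Aᵀ * (S * P * Sᵀ) * A) *ᵥ v := by
    rw [dot_trans, mulVec_mulVec, hNtB]
  have h4 : (N *ᵥ v) ⬝ᵥ B *ᵥ (N *ᵥ v) = v ⬝ᵥ (Aᵀ * (S * P * Sᵀ) * A) *ᵥ v := by
    rw [quad_congr, hNtBN]
  rw [mulVec_mulVec, ← hN, mulVec_sub, sub_dotProduct, dotProduct_sub, dotProduct_sub,
    h4, h3, h2]
  ring
end core
theorem capped_adaptive_one_step {m n τ q : ℕ} (hq : 0 < q)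
    (A : Matrix (Fin m) (Fin n) ℝ) (b : Fin m → ℝ)
    (B Bh : Matrix (Fin n) (Fin n) ℝ)
    (hB : B.PosDef) (hBh : Bh.PosDef) (hBhB : Bh * Bh = B)
    (S : Fin q → Matrix (Fin m) (Fin τ) ℝ) (P : Fin q → Matrix (Fin τ) (Fin τ) ℝ)
    (hP : ∀ i, PenroseInv ((S i)ᵀ * A * B⁻¹ * Aᵀ * S i) (P i))
    (θ : ℝ) (hθ0 : 0 ≤ θ) (hθ1 : θ ≤ 1)
    (p : Fin q → ℝ) (hp : ∀ i, 0 ≤ p i) (hp1 : ∑ i, p i = 1)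
    (x xs : Fin n → ℝ) (hxs : A.mulVec xs = b)
    (hx : x - xs ∈ Set.range (B⁻¹ * Aᵀ).mulVec)
    (qk : Fin q → ℝ) (hqk : ∀ i, 0 ≤ qk i) (hqk1 : ∑ i, qk i = 1)
    (hsupp : ∀ i, ¬ (θ * (⨆ j, zloss A B Bh (S j) (P j) xs x)
        + (1 - θ) * ∑ j, p j * zloss A B Bh (S j) (P j) xs x
      ≤ zloss A B Bh (S i) (P i) xs x) → qk i = 0) :
    (∃ i, θ * (⨆ j, zloss A B Bh (S j) (P j) xs x)
        + (1 - θ) * ∑ j, p j * zloss A B Bh (S j) (P j) xs x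
      ≤ zloss A B Bh (S i) (P i) xs x) ∧
    ∑ i, qk i *
        ((x - (B⁻¹ * Aᵀ * (S i * P i * (S i)ᵀ)).mulVec (A.mulVec x - b) - xs) ⬝ᵥ
          B.mulVec
            (x - (B⁻¹ * Aᵀ * (S i * P i * (S i)ᵀ)).mulVec (A.mulVec x - b) - xs))
      ≤ (1 - θ * sigmaInf A B Bh S P - (1 - θ) * sigmaP A B Bh S P p)
          * ((x - xs) ⬝ᵥ B.mulVec (x - xs)) := by
  haveI : Nonempty (Fin q) := ⟨⟨0, hq⟩⟩
  have hBs : Bᵀ = B := by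
    rw [← Matrix.conjTranspose_eq_transpose_of_trivial]; exact hB.1
  have hBhs : Bhᵀ = Bh := by
    rw [← Matrix.conjTranspose_eq_transpose_of_trivial]; exact hBh.1
  have hBd : IsUnit B.det := isUnit_iff_ne_zero.mpr (ne_of_gt hB.det_pos)
  have hBhd : IsUnit Bh.det := isUnit_iff_ne_zero.mpr (ne_of_gt hBh.det_pos)
  have hBinvs : (B⁻¹)ᵀ = B⁻¹ := by rw [Matrix.transpose_nonsing_inv, hBs]
  have hGs : ∀ i, ((S i)ᵀ * A * B⁻¹ * Aᵀ * S i)ᵀ = (S i)ᵀ * A * B⁻¹ * Aᵀ * S i := fun i => by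
    simp [transpose_mul, hBinvs, Matrix.mul_assoc]
  have hPs : ∀ i, (P i)ᵀ = P i := fun i => penroseInv_symm (hGs i) (hP i)
  -- the quadratic forms
  set f : Fin q → ℝ :=
    fun i => (x - xs) ⬝ᵥ (Aᵀ * (S i * P i * (S i)ᵀ) * A) *ᵥ (x - xs) with hfdef
  have hz : ∀ j, zloss A B Bh (S j) (P j) xs x = f j := fun j =>
    zq A B Bh (S j) (P j) hBhs hBhd (x - xs)
  have hfv0 : ∀ i (v : Fin n → ℝ),
      0 ≤ (Bh *ᵥ v) ⬝ᵥ (Zmat A B Bh (S i) (P i)) *ᵥ (Bh *ᵥ v) := fun i v => by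
    rw [zq A B Bh (S i) (P i) hBhs hBhd v]
    exact fnn A B Bh (S i) (P i) hBhs hBhd hBhB (hPs i) (hP i) v
  have hf0 : ∀ i, 0 ≤ f i := fun i =>
    fnn A B Bh (S i) (P i) hBhs hBhd hBhB (hPs i) (hP i) (x - xs)
  obtain ⟨i0, hi0⟩ := Finite.exists_max f
  have hzs : ∑ j, p j * zloss A B Bh (S j) (P j) xs x = ∑ j, p j * f j :=
    Finset.sum_congr rfl fun j _ => by rw [hz j]
  have hsum_le : ∑ j, p j * f j ≤ f i0 :=
    calc ∑ j, p j * f j ≤ ∑ j, p j * f i0 :=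
          Finset.sum_le_sum fun j _ => mul_le_mul_of_nonneg_left (hi0 j) (hp j)
      _ = f i0 := by rw [← Finset.sum_mul, hp1, one_mul]
  have hsup : (⨆ j, zloss A B Bh (S j) (P j) xs x) = f i0 := by
    apply le_antisymm
    · exact ciSup_le fun j => by rw [hz j]; exact hi0 j
    · have h := le_ciSup (f := fun j => zloss A B Bh (S j) (P j) xs x)
        (Set.Finite.bddAbove (Set.finite_range _)) i0
      rwa [hz i0] at h
  constructor
  · refine ⟨i0, ?_⟩
    rw [hsup, hzs, hz i0]
    nlinarith [mul_nonneg (sub_nonneg.2 hθ1) (sub_nonneg.2 hsum_le)]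
  -- the contraction bound
  have hAx : A *ᵥ x - b = A *ᵥ (x - xs) := by rw [mulVec_sub, hxs]
  have herr : ∀ i, (x - (B⁻¹ * Aᵀ * (S i * P i * (S i)ᵀ)) *ᵥ (A *ᵥ x - b) - xs) ⬝ᵥ
      B *ᵥ (x - (B⁻¹ * Aᵀ * (S i * P i * (S i)ᵀ)) *ᵥ (A *ᵥ x - b) - xs)
      = (x - xs) ⬝ᵥ B *ᵥ (x - xs) - f i := by
    intro i
    rw [hAx, sub_right_comm x _ xs]
    exact err_eq A B (S i) (P i) hBs hBd (hPs i) (hP i) (x - xs)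
  rw [show (∑ i, qk i *
        ((x - (B⁻¹ * Aᵀ * (S i * P i * (S i)ᵀ)).mulVec (A.mulVec x - b) - xs) ⬝ᵥ
          B.mulVec
            (x - (B⁻¹ * Aᵀ * (S i * P i * (S i)ᵀ)).mulVec (A.mulVec x - b) - xs)))
      = ∑ i, qk i * ((x - xs) ⬝ᵥ B *ᵥ (x - xs) - f i) from
    Finset.sum_congr rfl fun i _ => by rw [herr i]]
  by_cases hy : x - xs = 0
  · have hfz : ∀ i, f i = 0 := fun i => by rw [hfdef]; simp [hy]
    have hcz : (x - xs) ⬝ᵥ B *ᵥ (x - xs) = 0 := by rw [hy]; simp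
    simp [hfz, hcz]
  · have hc : 0 < (x - xs) ⬝ᵥ B *ᵥ (x - xs) := by
      have h := hB.dotProduct_mulVec_pos hy; simpa using h
    -- sigmaInf bound
    have hbddInf : BddBelow {r : ℝ | ∃ v, v ≠ 0 ∧ v ∈ Set.range (B⁻¹ * Aᵀ).mulVec ∧
        r = ⨆ i, Bh.mulVec v ⬝ᵥ (Zmat A B Bh (S i) (P i)).mulVec (Bh.mulVec v) /
          (v ⬝ᵥ B.mulVec v)} := by
      refine ⟨0, fun r hr => ?_⟩
      obtain ⟨v, hv, -, rfl⟩ := hr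
      have hvc : (0:ℝ) ≤ v ⬝ᵥ B *ᵥ v := le_of_lt (by have h := hB.dotProduct_mulVec_pos hv; simpa using h)
      exact Real.iSup_nonneg fun i => div_nonneg (hfv0 i v) hvc
    have hmemInf : (⨆ i, Bh.mulVec (x - xs) ⬝ᵥ
          (Zmat A B Bh (S i) (P i)).mulVec (Bh.mulVec (x - xs)) /
          ((x - xs) ⬝ᵥ B.mulVec (x - xs))) ∈
        {r : ℝ | ∃ v, v ≠ 0 ∧ v ∈ Set.range (B⁻¹ * Aᵀ).mulVec ∧
          r = ⨆ i, Bh.mulVec v ⬝ᵥ (Zmat A B Bh (S i) (P i)).mulVec (Bh.mulVec v) /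
            (v ⬝ᵥ B.mulVec v)} := ⟨x - xs, hy, hx, rfl⟩
    have hsupdiv : (⨆ i, Bh.mulVec (x - xs) ⬝ᵥ
          (Zmat A B Bh (S i) (P i)).mulVec (Bh.mulVec (x - xs)) /
          ((x - xs) ⬝ᵥ B.mulVec (x - xs)))
        = f i0 / ((x - xs) ⬝ᵥ B *ᵥ (x - xs)) := by
      have hterm : ∀ j, Bh.mulVec (x - xs) ⬝ᵥ
          (Zmat A B Bh (S j) (P j)).mulVec (Bh.mulVec (x - xs)) /
          ((x - xs) ⬝ᵥ B.mulVec (x - xs)) = f j / ((x - xs) ⬝ᵥ B *ᵥ (x - xs)) := fun j => by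
        rw [zq A B Bh (S j) (P j) hBhs hBhd (x - xs)]
      apply le_antisymm
      · refine ciSup_le fun j => ?_
        rw [hterm j]
        exact div_le_div_of_nonneg_right (hi0 j) hc.le
      · have h := le_ciSup (f := fun j => Bh.mulVec (x - xs) ⬝ᵥ
            (Zmat A B Bh (S j) (P j)).mulVec (Bh.mulVec (x - xs)) /
            ((x - xs) ⬝ᵥ B.mulVec (x - xs))) (Set.Finite.bddAbove (Set.finite_range _)) i0
        rwa [hterm i0] at h
    have hInf : sigmaInf A B Bh S P * ((x - xs) ⬝ᵥ B *ᵥ (x - xs)) ≤ f i0 := by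
      have h := csInf_le hbddInf hmemInf
      rw [sigmaInf] at *
      rw [hsupdiv] at h
      exact (le_div_iff₀ hc).mp h
    -- sigmaP bound
    have hnum : ∀ v : Fin n → ℝ, Bh.mulVec v ⬝ᵥ
        (∑ i, p i • Zmat A B Bh (S i) (P i)).mulVec (Bh.mulVec v)
        = ∑ i, p i * (Bh.mulVec v ⬝ᵥ (Zmat A B Bh (S i) (P i)).mulVec (Bh.mulVec v)) := by
      intro v
      rw [show (∑ i, p i • Zmat A B Bh (S i) (P i)).mulVec (Bh.mulVec v)
          = ∑ i, (p i • Zmat A B Bh (S i) (P i)).mulVec (Bh.mulVec v) from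
        map_sum (Matrix.mulVec.addMonoidHomLeft (Bh.mulVec v)) _ _, dot_sum]
      exact Finset.sum_congr rfl fun i _ => by
        rw [Matrix.smul_mulVec, dotProduct_smul, smul_eq_mul]
    have hbddP : BddBelow {r : ℝ | ∃ v, v ≠ 0 ∧ v ∈ Set.range (B⁻¹ * Aᵀ).mulVec ∧
        r = Bh.mulVec v ⬝ᵥ (∑ i, p i • Zmat A B Bh (S i) (P i)).mulVec (Bh.mulVec v) /
          (v ⬝ᵥ B.mulVec v)} := by
      refine ⟨0, fun r hr => ?_⟩
      obtain ⟨v, hv, -, rfl⟩ := hr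
      have hvc : (0:ℝ) ≤ v ⬝ᵥ B *ᵥ v := le_of_lt (by have h := hB.dotProduct_mulVec_pos hv; simpa using h)
      refine div_nonneg ?_ hvc
      rw [hnum v]
      exact Finset.sum_nonneg fun i _ => mul_nonneg (hp i) (hfv0 i v)
    have hmemP : (Bh.mulVec (x - xs) ⬝ᵥ
          (∑ i, p i • Zmat A B Bh (S i) (P i)).mulVec (Bh.mulVec (x - xs)) /
          ((x - xs) ⬝ᵥ B.mulVec (x - xs))) ∈
        {r : ℝ | ∃ v, v ≠ 0 ∧ v ∈ Set.range (B⁻¹ * Aᵀ).mulVec ∧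
          r = Bh.mulVec v ⬝ᵥ (∑ i, p i • Zmat A B Bh (S i) (P i)).mulVec (Bh.mulVec v) /
            (v ⬝ᵥ B.mulVec v)} := ⟨x - xs, hy, hx, rfl⟩
    have hP2 : sigmaP A B Bh S P p * ((x - xs) ⬝ᵥ B *ᵥ (x - xs)) ≤ ∑ j, p j * f j := by
      have h := csInf_le hbddP hmemP
      rw [sigmaP] at *
      rw [hnum (x - xs)] at h
      have hn : ∑ i, p i * (Bh.mulVec (x - xs) ⬝ᵥ
            (Zmat A B Bh (S i) (P i)).mulVec (Bh.mulVec (x - xs))) = ∑ j, p j * f j :=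
        Finset.sum_congr rfl fun j _ => by rw [zq A B Bh (S j) (P j) hBhs hBhd (x - xs)]
      rw [hn] at h
      exact (le_div_iff₀ hc).mp h
    -- support condition
    have key : θ * f i0 + (1 - θ) * ∑ j, p j * f j ≤ ∑ i, qk i * f i := by
      have hpt : ∀ i, qk i * (θ * f i0 + (1 - θ) * ∑ j, p j * f j) ≤ qk i * f i := by
        intro i
        by_cases hcase : θ * (⨆ j, zloss A B Bh (S j) (P j) xs x)
            + (1 - θ) * ∑ j, p j * zloss A B Bh (S j) (P j) xs x
            ≤ zloss A B Bh (S i) (P i) xs x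
        · rw [hsup, hzs, hz i] at hcase
          exact mul_le_mul_of_nonneg_left hcase (hqk i)
        · rw [hsupp i hcase]; simp
      calc θ * f i0 + (1 - θ) * ∑ j, p j * f j
          = ∑ i, qk i * (θ * f i0 + (1 - θ) * ∑ j, p j * f j) := by
            rw [← Finset.sum_mul, hqk1, one_mul]
        _ ≤ ∑ i, qk i * f i := Finset.sum_le_sum fun i _ => hpt i
    have hexp : ∑ i, qk i * ((x - xs) ⬝ᵥ B *ᵥ (x - xs) - f i)
        = (x - xs) ⬝ᵥ B *ᵥ (x - xs) - ∑ i, qk i * f i := by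
      rw [Finset.sum_congr rfl fun i _ => mul_sub (qk i) _ (f i), Finset.sum_sub_distrib,
        ← Finset.sum_mul, hqk1, one_mul]
    rw [hexp]
    have t1 : θ * (sigmaInf A B Bh S P * ((x - xs) ⬝ᵥ B *ᵥ (x - xs))) ≤ θ * f i0 :=
      mul_le_mul_of_nonneg_left hInf hθ0
    have t2 : (1 - θ) * (sigmaP A B Bh S P p * ((x - xs) ⬝ᵥ B *ᵥ (x - xs)))
        ≤ (1 - θ) * ∑ j, p j * f j :=
      mul_le_mul_of_nonneg_left hP2 (sub_nonneg.2 hθ1)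
    nlinarith [key, t1, t2]
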